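/- For n ≥ k = l+m and f(n) the number of permutations in S_n avoiding σ^a P_{l,m} (with l,m ≥ 1 and 0 ≤ a ≤ m), one has the linear recurrence ∑_{j=0}^{l} (-1)^j j! C(m,j) C(l,j) f(n-j) = 0. -/

import Mathlib

open Finset Equiv

/-- `π` contains the pattern `τ`: some increasing subsequence of `π` is
order-isomorphic to `τ`. -/
def PContains {k n : ℕ} (τ : Equiv.Perm (Fin k)) (π : Equiv.Perm (Fin n)) : Prop :=
  ∃ f : Fin k ↪o Fin n, ∀ i j : Fin k, τ i < τ j ↔ π (f i) < π (f j)

/-- `π` avoids every pattern in `T`. -/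
def PAvoids {k n : ℕ} (π : Equiv.Perm (Fin n)) (T : Set (Equiv.Perm (Fin k))) : Prop :=
  ∀ τ ∈ T, ¬ PContains τ π

/-- The coset `σ^a P_{l,m}` of the maximal parabolic subgroup of `S_k` (`k = l+m`):
`τ ∈ σ^a P_{l,m}` iff the first `l` (1-based) values of `τ` are a permutation of
`{a+1, ..., a+l}` taken modulo `k` (in 0-based terms: `(τ j - a) mod k < l`). -/
def sigmaP (k l a : ℕ) : Set (Equiv.Perm (Fin k)) :=
  {τ | ∀ j : Fin k, (j : ℕ) < l → ((τ j : ℕ) + k - a) % k < l}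

/-- The number of permutations of `S_n` avoiding every pattern in `T ⊆ S_k`. -/
noncomputable def avoidersCard (k : ℕ) (T : Set (Equiv.Perm (Fin k))) (n : ℕ) : ℕ :=
  {π : Equiv.Perm (Fin n) | PAvoids π T}.ncard

namespace AvoidRec

def Spec (n m a : ℕ) (v : Fin n) : Prop := (v : ℕ) < a ∨ n - m + a ≤ (v : ℕ)

lemma mem_sigmaP_iff {l m a : ℕ} (ha : a ≤ m) (τ : Perm (Fin (l + m))) :
    τ ∈ sigmaP (l + m) l a ↔ ∀ i : Fin (l + m), (i : ℕ) < l → a ≤ (τ i : ℕ) ∧ (τ i : ℕ) < a + l := by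
  simp only [sigmaP, Set.mem_setOf_eq]
  refine forall_congr' fun i => imp_congr_right fun hi => ?_
  set x := (τ i : ℕ) with hx
  have hxlt : x < l + m := (τ i).2
  rcases le_or_gt a x with h1 | h1
  · have h2 : x + (l + m) - a = (x - a) + (l + m) := by omega
    rw [h2, Nat.add_mod_right, Nat.mod_eq_of_lt (by omega)]
    omega
  · rw [Nat.mod_eq_of_lt (by omega)]
    omega

lemma perm_rank {k : ℕ} (τ : Perm (Fin k)) (i : Fin k) :
    #(univ.filter fun r => τ r < τ i) = (τ i : ℕ) := by
  rw [show ((τ i : ℕ)) = #(Iio (τ i)) from (Fin.card_Iio _).symm]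
  apply Finset.card_nbij (fun r => τ r)
  · intro r hr; simp only [Finset.mem_coe, mem_filter, mem_univ, true_and] at hr; simpa using hr
  · intro x _ y _ h; exact τ.injective h
  · intro v hv; simp only [coe_Iio, Set.mem_Iio] at hv
    exact ⟨τ.symm v, by simpa using hv, by simp⟩

lemma perm_corank {k : ℕ} (τ : Perm (Fin k)) (i : Fin k) :
    #(univ.filter fun r => τ i < τ r) = k - 1 - (τ i : ℕ) := by
  rw [show (k - 1 - (τ i : ℕ)) = #(Ioi (τ i)) from (Fin.card_Ioi _).symm]
  apply Finset.card_nbij (fun r => τ r)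
  · intro r hr; simp only [Finset.mem_coe, mem_filter, mem_univ, true_and] at hr; simpa using hr
  · intro x _ y _ h; exact τ.injective h
  · intro v hv; simp only [coe_Ioi, Set.mem_Ioi] at hv
    exact ⟨τ.symm v, by simpa using hv, by simp⟩

lemma card_filter_val_lt {n : ℕ} (c : ℕ) (hc : c ≤ n) :
    #(univ.filter fun u : Fin n => (u : ℕ) < c) = c := by
  have himg : (univ.filter fun u : Fin n => (u : ℕ) < c) =
      (univ : Finset (Fin c)).image (Fin.castLE hc) := by
    ext u
    simp only [mem_filter, mem_univ, true_and, mem_image]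
    constructor
    · intro h; exact ⟨⟨u, h⟩, Fin.ext rfl⟩
    · rintro ⟨v, rfl⟩; exact v.2
  rw [himg, Finset.card_image_of_injective _ (Fin.castLE_injective hc)]
  simp

lemma card_filter_le_val {n : ℕ} (c : ℕ) (hc : c ≤ n) :
    #(univ.filter fun u : Fin n => c ≤ (u : ℕ)) = n - c := by
  have h := Finset.card_filter_add_card_filter_not
    (s := (univ : Finset (Fin n))) (p := fun u : Fin n => (u : ℕ) < c)
  rw [card_filter_val_lt c hc, card_univ, Fintype.card_fin] at h
  have he : (univ.filter fun u : Fin n => ¬ (u : ℕ) < c)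
      = (univ.filter fun u : Fin n => c ≤ (u : ℕ)) := by
    apply filter_congr; intro u _; simp [not_lt]
  rw [he] at h
  omega


instance {n m a : ℕ} (v : Fin n) : Decidable (Spec n m a v) := by
  unfold Spec; infer_instance

section Pattern
variable {n k : ℕ} (π : Perm (Fin n)) (S : Finset (Fin n))

/-- the equiv between a finset and its image under a permutation -/
def imgEquiv : {x // x ∈ S} ≃ {x // x ∈ S.image π} where
  toFun p := ⟨π p, Finset.mem_image_of_mem _ p.2⟩
  invFun v := ⟨π.symm v, by
    obtain ⟨p, hp, he⟩ := Finset.mem_image.mp v.2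
    simpa [← he] using hp⟩
  left_inv p := by simp
  right_inv v := by simp

variable (hS : #S = k) (hV : #(S.image π) = k)

/-- the pattern of `π` on the subset `S` -/
noncomputable def patPerm : Perm (Fin k) :=
  (S.orderIsoOfFin hS).toEquiv.trans ((imgEquiv π S).trans ((S.image π).orderIsoOfFin hV).toEquiv.symm)

lemma patPerm_lt_iff (i i' : Fin k) :
    patPerm π S hS hV i < patPerm π S hS hV i' ↔
      π (S.orderEmbOfFin hS i) < π (S.orderEmbOfFin hS i') := by
  have h1 : ∀ r : Fin k, ((S.image π).orderIsoOfFin hV) (patPerm π S hS hV r)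
      = (imgEquiv π S) ((S.orderIsoOfFin hS) r) := by
    intro r; simp [patPerm]
  rw [← OrderIso.lt_iff_lt ((S.image π).orderIsoOfFin hV), h1, h1,
    ← Subtype.coe_lt_coe]
  simp [imgEquiv, Finset.coe_orderIsoOfFin_apply]

lemma patPerm_contains : PContains (patPerm π S hS hV) π :=
  ⟨S.orderEmbOfFin hS, fun i i' => patPerm_lt_iff π S hS hV i i'⟩

lemma orderEmbOfFin_symm' (p : Fin n) (hp : p ∈ S) :
    S.orderEmbOfFin hS ((S.orderIsoOfFin hS).symm ⟨p, hp⟩) = p := by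
  rw [← Finset.coe_orderIsoOfFin_apply, OrderIso.apply_symm_apply]

end Pattern

section ClaimA
variable {l m a n : ℕ}

/-- Claim A: every avoider has a special value in the first `l` positions. -/
lemma exists_spec (hl : 1 ≤ l) (hm : 1 ≤ m) (ha : a ≤ m) (hn : l + m ≤ n)
    (π : Perm (Fin n)) (hπ : PAvoids π (sigmaP (l + m) l a)) :
    ∃ p : Fin n, (p : ℕ) < l ∧ Spec n m a (π p) := by
  by_contra hocc
  push_neg at hocc
  have hocc' : ∀ p : Fin n, (p : ℕ) < l → a ≤ (π p : ℕ) ∧ (π p : ℕ) < n - m + a := by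
    intro p hp
    have := hocc p hp
    simp only [Spec, not_or, not_lt, not_le] at this
    exact ⟨this.1, this.2⟩
  set S : Finset (Fin n) := univ.filter (fun p => (p : ℕ) < l ∨ Spec n m a (π p)) with hSdef
  have hmemS : ∀ p : Fin n, p ∈ S ↔ ((p : ℕ) < l ∨ Spec n m a (π p)) := by
    intro p; simp [hSdef]
  have hsplit : S = (univ.filter fun p : Fin n => (p : ℕ) < l) ∪
      (univ.filter fun p : Fin n => Spec n m a (π p)) := by
    rw [hSdef, Finset.filter_or]
  have hdisj : Disjoint (univ.filter fun p : Fin n => (p : ℕ) < l)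
      (univ.filter fun p : Fin n => Spec n m a (π p)) := by
    rw [Finset.disjoint_left]
    intro p hp1 hp2
    simp only [mem_filter, mem_univ, true_and] at hp1 hp2
    exact hocc p hp1 hp2
  have hspecval : #(univ.filter fun p : Fin n => Spec n m a (π p)) = m := by
    have hb : (univ.filter fun p : Fin n => Spec n m a (π p)).card
        = (univ.filter fun v : Fin n => Spec n m a v).card := by
      apply Finset.card_nbij (fun p => π p)
      · intro p hp; simp only [Finset.mem_coe, mem_filter, mem_univ, true_and] at hp ⊢; exact hp
      · intro x _ y _ h; exact π.injective h
      · intro v hv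
        simp only [coe_filter, Set.mem_setOf_eq, mem_univ, true_and] at hv ⊢
        exact ⟨π.symm v, by simpa using hv, by simp⟩
    rw [hb]
    have hu : (univ.filter fun v : Fin n => Spec n m a v)
        = (univ.filter fun v : Fin n => (v : ℕ) < a) ∪
          (univ.filter fun v : Fin n => n - m + a ≤ (v:ℕ)) := by
      rw [← Finset.filter_or]
      apply Finset.filter_congr; intro v _; rfl
    have hd2 : Disjoint (univ.filter fun v : Fin n => (v : ℕ) < a)
        (univ.filter fun v : Fin n => n - m + a ≤ (v:ℕ)) := by
      rw [Finset.disjoint_left]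
      intro v h1 h2
      simp only [mem_filter, mem_univ, true_and] at h1 h2
      omega
    rw [hu, Finset.card_union_of_disjoint hd2, card_filter_val_lt a (by omega),
      card_filter_le_val (n - m + a) (by omega)]
    omega
  have hScard : #S = l + m := by
    rw [hsplit, Finset.card_union_of_disjoint hdisj, hspecval, card_filter_val_lt l (by omega)]
  have hV : #(S.image π) = l + m := by
    rw [Finset.card_image_of_injective _ π.injective, hScard]
  set g := S.orderEmbOfFin hScard with hgdef
  set τ := patPerm π S hScard hV with hτdef
  -- the first l elements of S are exactly the positions < l
  have hgl : ∀ i : Fin (l + m), (i : ℕ) < l → (g i : ℕ) < l := by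
    intro i hi
    by_contra hgi
    push_neg at hgi
    have hsurj : l ≤ #(Iio i) := by
      have hle : #(univ.filter fun p : Fin n => (p : ℕ) < l) ≤ #(Iio i) := by
        apply Finset.card_le_card_of_surjOn (fun r => g r)
        intro p hp
        simp only [coe_filter, Set.mem_setOf_eq, mem_univ, true_and] at hp
        have hpS : p ∈ S := (hmemS p).mpr (Or.inl hp)
        refine ⟨(S.orderIsoOfFin hScard).symm ⟨p, hpS⟩, ?_, orderEmbOfFin_symm' S hScard p hpS⟩
        have hgr : g ((S.orderIsoOfFin hScard).symm ⟨p, hpS⟩) = p :=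
          orderEmbOfFin_symm' S hScard p hpS
        have hlt : g ((S.orderIsoOfFin hScard).symm ⟨p, hpS⟩) < g i := by
          rw [hgr]; exact Fin.lt_def.mpr (by omega)
        simpa using (OrderEmbedding.lt_iff_lt g).mp hlt
      rwa [card_filter_val_lt l (by omega)] at hle
    rw [Fin.card_Iio] at hsurj
    omega
  have hτmem : τ ∈ sigmaP (l + m) l a := by
    rw [mem_sigmaP_iff ha]
    intro i hi
    have hgil := hgl i hi
    have hval := hocc' (g i) hgil
    have hlow : a ≤ (τ i : ℕ) := by
      rw [← perm_rank τ i]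
      have hle : #(univ.filter fun u : Fin n => (u : ℕ) < a)
          ≤ #(univ.filter fun r => τ r < τ i) := by
        apply Finset.card_le_card_of_surjOn (fun r => π (g r))
        intro u hu
        simp only [coe_filter, Set.mem_setOf_eq, mem_univ, true_and] at hu
        have hqS : π.symm u ∈ S := (hmemS _).mpr (Or.inr (by
          simp only [Spec, Equiv.apply_symm_apply]; exact Or.inl hu))
        refine ⟨(S.orderIsoOfFin hScard).symm ⟨π.symm u, hqS⟩, ?_, ?_⟩
        · have hgr : g ((S.orderIsoOfFin hScard).symm ⟨π.symm u, hqS⟩) = π.symm u :=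
            orderEmbOfFin_symm' S hScard _ hqS
          simp only [coe_filter, Set.mem_setOf_eq, mem_univ, true_and]
          rw [hτdef, patPerm_lt_iff]
          rw [← hgdef, hgr, Equiv.apply_symm_apply]
          exact Fin.lt_def.mpr (by omega)
        · have hgr : g ((S.orderIsoOfFin hScard).symm ⟨π.symm u, hqS⟩) = π.symm u :=
            orderEmbOfFin_symm' S hScard _ hqS
          show π (g ((S.orderIsoOfFin hScard).symm ⟨π.symm u, hqS⟩)) = u
          rw [hgr, Equiv.apply_symm_apply]
      rwa [card_filter_val_lt a (by omega)] at hle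
    have hhigh : (τ i : ℕ) < a + l := by
      have hle : #(univ.filter fun u : Fin n => n - m + a ≤ (u : ℕ))
          ≤ #(univ.filter fun r => τ i < τ r) := by
        apply Finset.card_le_card_of_surjOn (fun r => π (g r))
        intro u hu
        simp only [coe_filter, Set.mem_setOf_eq, mem_univ, true_and] at hu
        have hqS : π.symm u ∈ S := (hmemS _).mpr (Or.inr (by
          simp only [Spec, Equiv.apply_symm_apply]; exact Or.inr hu))
        refine ⟨(S.orderIsoOfFin hScard).symm ⟨π.symm u, hqS⟩, ?_, ?_⟩
        · have hgr : g ((S.orderIsoOfFin hScard).symm ⟨π.symm u, hqS⟩) = π.symm u :=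
            orderEmbOfFin_symm' S hScard _ hqS
          simp only [coe_filter, Set.mem_setOf_eq, mem_univ, true_and]
          rw [hτdef, patPerm_lt_iff]
          rw [← hgdef, hgr, Equiv.apply_symm_apply]
          exact Fin.lt_def.mpr (by omega)
        · have hgr : g ((S.orderIsoOfFin hScard).symm ⟨π.symm u, hqS⟩) = π.symm u :=
            orderEmbOfFin_symm' S hScard _ hqS
          show π (g ((S.orderIsoOfFin hScard).symm ⟨π.symm u, hqS⟩)) = u
          rw [hgr, Equiv.apply_symm_apply]
      rw [card_filter_le_val (n - m + a) (by omega)] at hle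
      rw [perm_corank τ i] at hle
      have := (τ i).2
      omega
    exact ⟨hlow, hhigh⟩
  exact hπ τ hτmem (patPerm_contains π S hScard hV)

end ClaimA


lemma orderIsoOfFin_symm_emb {α : Type*} [LinearOrder α] (s : Finset α) {k : ℕ}
    (hs : #s = k) (i : Fin k) :
    (s.orderIsoOfFin hs).symm ⟨s.orderEmbOfFin hs i, Finset.orderEmbOfFin_mem s hs i⟩ = i := by
  have h : (⟨s.orderEmbOfFin hs i, Finset.orderEmbOfFin_mem s hs i⟩ : {x // x ∈ s})
      = s.orderIsoOfFin hs i := Subtype.ext (Finset.coe_orderIsoOfFin_apply s hs i).symm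
  rw [h, OrderIso.symm_apply_apply]

lemma emb_val_le {k n : ℕ} (g : Fin k ↪o Fin n) (i : Fin k) : (i : ℕ) ≤ (g i : ℕ) := by
  have hle : #(Iic i) ≤ #(Iic (g i)) := by
    apply Finset.card_le_card_of_injOn (fun r => g r)
    · intro r hr
      simp only [Finset.mem_coe, mem_Iic] at hr ⊢
      exact (OrderEmbedding.le_iff_le g).mpr hr
    · intro x _ y _ h; exact g.injective h
  rwa [Fin.card_Iic, Fin.card_Iic, add_le_add_iff_right] at hle

lemma card_filter_val_gt {n : ℕ} (c : ℕ) (hc : c < n) :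
    #(univ.filter fun u : Fin n => c < (u : ℕ)) = n - (c + 1) := by
  rw [← card_filter_le_val (c + 1) hc]
  apply congrArg
  apply Finset.filter_congr; intro u _
  constructor <;> intro h <;> omega

section Crux
variable {l m a n : ℕ} (M : Finset (Fin n)) (ψ : Fin n → Fin n)

lemma compl_card : #(Mᶜ) = n - #M := by
  rw [Finset.card_compl, Fintype.card_fin]

lemma complV_card (hψinj : Set.InjOn ψ ↑M) : #((M.image ψ)ᶜ) = n - #M := by
  rw [Finset.card_compl, Fintype.card_fin, Finset.card_image_of_injOn hψinj]

variable {M ψ}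

lemma pi_mem_complV {π : Perm (Fin n)} (hext : ∀ p ∈ M, π p = ψ p)
    {x : Fin n} (hx : x ∈ Mᶜ) : π x ∈ (M.image ψ)ᶜ := by
  rw [Finset.mem_compl] at hx ⊢
  intro hmem
  obtain ⟨p, hp, he⟩ := Finset.mem_image.mp hmem
  rw [← hext p hp] at he
  exact hx (by rwa [← π.injective he])

/-- push a permutation extending the partial map `ψ` down to the complement -/
noncomputable def downPerm (hψinj : Set.InjOn ψ ↑M)
    (π : Perm (Fin n)) (hext : ∀ p ∈ M, π p = ψ p) : Perm (Fin (n - #M)) :=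
  Equiv.ofBijective
    (fun i => ((M.image ψ)ᶜ.orderIsoOfFin (complV_card M ψ hψinj)).symm
      ⟨π ((Mᶜ).orderEmbOfFin (compl_card M) i),
       pi_mem_complV hext (Finset.orderEmbOfFin_mem _ _ i)⟩)
    (Finite.injective_iff_bijective.mp (by
      intro x y h
      have h2 := congrArg (((M.image ψ)ᶜ.orderIsoOfFin (complV_card M ψ hψinj))) h
      simp only [OrderIso.apply_symm_apply] at h2
      have h3 : π ((Mᶜ).orderEmbOfFin (compl_card M) x) = π ((Mᶜ).orderEmbOfFin (compl_card M) y) :=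
        congrArg Subtype.val h2
      exact ((Mᶜ).orderEmbOfFin (compl_card M)).injective (π.injective h3)))

lemma downPerm_val (hψinj : Set.InjOn ψ ↑M)
    (π : Perm (Fin n)) (hext : ∀ p ∈ M, π p = ψ p) (i : Fin (n - #M)) :
    ((M.image ψ)ᶜ.orderEmbOfFin (complV_card M ψ hψinj) (downPerm hψinj π hext i))
      = π ((Mᶜ).orderEmbOfFin (compl_card M) i) := by
  show ((M.image ψ)ᶜ.orderEmbOfFin (complV_card M ψ hψinj))
    (((M.image ψ)ᶜ.orderIsoOfFin (complV_card M ψ hψinj)).symm ⟨_, _⟩) = _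
  rw [orderEmbOfFin_symm']

lemma contains_of_contains_down {k : ℕ} (hψinj : Set.InjOn ψ ↑M)
    (π : Perm (Fin n)) (hext : ∀ p ∈ M, π p = ψ p) (τ : Perm (Fin k))
    (h : PContains τ (downPerm hψinj π hext)) : PContains τ π := by
  obtain ⟨fe, hfe⟩ := h
  refine ⟨fe.trans ((Mᶜ).orderEmbOfFin (compl_card M)), fun i i' => ?_⟩
  rw [hfe i i']
  show downPerm hψinj π hext (fe i) < downPerm hψinj π hext (fe i') ↔
    π ((Mᶜ).orderEmbOfFin (compl_card M) (fe i)) < π ((Mᶜ).orderEmbOfFin (compl_card M) (fe i'))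
  rw [← downPerm_val hψinj π hext, ← downPerm_val hψinj π hext]
  exact (OrderEmbedding.lt_iff_lt _).symm

lemma contains_down_of_contains (ha : a ≤ m)
    (hM : ∀ p ∈ M, (p : ℕ) < l) (hψinj : Set.InjOn ψ ↑M)
    (hψspec : ∀ p ∈ M, Spec n m a (ψ p))
    (π : Perm (Fin n)) (hext : ∀ p ∈ M, π p = ψ p) (τ : Perm (Fin (l + m)))
    (hτ : τ ∈ sigmaP (l + m) l a)
    (h : PContains τ π) : PContains τ (downPerm hψinj π hext) := by
  obtain ⟨g, hg⟩ := h
  have step1 : ∀ i : Fin (l + m), g i ∉ M := by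
    intro i hgiM
    have hpos : (g i : ℕ) < l := hM _ hgiM
    have hvψ : π (g i) = ψ (g i) := hext _ hgiM
    have hspec := hψspec _ hgiM
    have hile : (i : ℕ) ≤ (g i : ℕ) := emb_val_le g i
    have hil : (i : ℕ) < l := by omega
    have hτi := (mem_sigmaP_iff ha τ).mp hτ i hil
    rcases hspec with hlow | hhigh
    · have hr := perm_rank τ i
      have hle : #(univ.filter fun r => τ r < τ i)
          ≤ #(univ.filter fun u : Fin n => (u : ℕ) < (ψ (g i) : ℕ)) := by
        apply Finset.card_le_card_of_injOn (fun r => π (g r))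
        · intro r hr2
          simp only [Finset.mem_coe, mem_filter, mem_univ, true_and] at hr2 ⊢
          have := (hg r i).mp hr2
          rw [hvψ] at this
          exact this
        · intro x _ y _ hxy
          exact g.injective (π.injective hxy)
      rw [hr, card_filter_val_lt _ (le_of_lt (ψ (g i)).2)] at hle
      omega
    · have hr := perm_corank τ i
      have hle : #(univ.filter fun r => τ i < τ r)
          ≤ #(univ.filter fun u : Fin n => (ψ (g i) : ℕ) < (u : ℕ)) := by
        apply Finset.card_le_card_of_injOn (fun r => π (g r))
        · intro r hr2
          simp only [Finset.mem_coe, mem_filter, mem_univ, true_and] at hr2 ⊢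
          have := (hg i r).mp hr2
          rw [hvψ] at this
          exact this
        · intro x _ y _ hxy
          exact g.injective (π.injective hxy)
      rw [hr, card_filter_val_gt _ (ψ (g i)).2] at hle
      have hki := (τ i).2
      have hvn := (ψ (g i)).2
      omega
  have hmemc : ∀ i, g i ∈ Mᶜ := fun i => Finset.mem_compl.mpr (step1 i)
  have hmono : StrictMono (fun i => ((Mᶜ).orderIsoOfFin (compl_card M)).symm ⟨g i, hmemc i⟩) := by
    intro i i' hlt
    rw [OrderIso.lt_iff_lt]
    exact Subtype.mk_lt_mk.mpr ((OrderEmbedding.lt_iff_lt g).mpr hlt)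
  refine ⟨OrderEmbedding.ofStrictMono _ hmono, fun i i' => ?_⟩
  have hkey : ∀ r : Fin (l + m),
      ((M.image ψ)ᶜ.orderEmbOfFin (complV_card M ψ hψinj))
        ((downPerm hψinj π hext) (((Mᶜ).orderIsoOfFin (compl_card M)).symm ⟨g r, hmemc r⟩))
      = π (g r) := by
    intro r
    rw [downPerm_val hψinj π hext]
    congr 1
    exact orderEmbOfFin_symm' (Mᶜ) (compl_card M) (g r) (hmemc r)
  rw [hg i i']
  show _ ↔ (downPerm hψinj π hext) (((Mᶜ).orderIsoOfFin (compl_card M)).symm ⟨g i, hmemc i⟩)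
      < (downPerm hψinj π hext) (((Mᶜ).orderIsoOfFin (compl_card M)).symm ⟨g i', hmemc i'⟩)
  rw [← OrderEmbedding.lt_iff_lt ((M.image ψ)ᶜ.orderEmbOfFin (complV_card M ψ hψinj)),
    hkey i, hkey i']

lemma avoids_down_iff (ha : a ≤ m)
    (hM : ∀ p ∈ M, (p : ℕ) < l) (hψinj : Set.InjOn ψ ↑M)
    (hψspec : ∀ p ∈ M, Spec n m a (ψ p))
    (π : Perm (Fin n)) (hext : ∀ p ∈ M, π p = ψ p) :
    PAvoids π (sigmaP (l + m) l a) ↔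
      PAvoids (downPerm hψinj π hext) (sigmaP (l + m) l a) := by
  constructor
  · intro hav τ hτ hcont
    exact hav τ hτ (contains_of_contains_down hψinj π hext τ hcont)
  · intro hav τ hτ hcont
    exact hav τ hτ (contains_down_of_contains ha hM hψinj hψspec π hext τ hτ hcont)

end Crux


section Up
variable {l m a n : ℕ} {M : Finset (Fin n)} {ψ : Fin n → Fin n}

noncomputable def upPerm (hψinj : Set.InjOn ψ ↑M) (ρ : Perm (Fin (n - #M))) : Perm (Fin n) :=
  Equiv.ofBijective
    (fun x => if h : x ∈ M then ψ x
      else ((M.image ψ)ᶜ).orderEmbOfFin (complV_card M ψ hψinj)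
        (ρ (((Mᶜ).orderIsoOfFin (compl_card M)).symm ⟨x, Finset.mem_compl.mpr h⟩)))
    (Finite.injective_iff_bijective.mp (by
      intro x y h
      by_cases hx : x ∈ M <;> by_cases hy : y ∈ M <;> simp only [hx, hy, dif_pos, dif_neg,
        not_false_iff, dite_true, dite_false] at h
      · exact hψinj hx hy h
      · exact absurd (h ▸ Finset.mem_image_of_mem ψ hx)
          (Finset.mem_compl.mp (Finset.orderEmbOfFin_mem _ _ _))
      · exact absurd (h ▸ Finset.mem_image_of_mem ψ hy)
          (Finset.mem_compl.mp (Finset.orderEmbOfFin_mem _ _ _))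
      · have h2 := ρ.injective
          ((((M.image ψ)ᶜ).orderEmbOfFin (complV_card M ψ hψinj)).injective h)
        have h3 := ((Mᶜ).orderIsoOfFin (compl_card M)).symm.injective h2
        exact Subtype.ext_iff.mp h3))

lemma upPerm_ext (hψinj : Set.InjOn ψ ↑M) (ρ : Perm (Fin (n - #M))) :
    ∀ p ∈ M, upPerm hψinj ρ p = ψ p := by
  intro p hp
  show (if h : p ∈ M then ψ p else _) = ψ p
  rw [dif_pos hp]

lemma down_up (hψinj : Set.InjOn ψ ↑M) (ρ : Perm (Fin (n - #M))) :
    downPerm hψinj (upPerm hψinj ρ) (upPerm_ext hψinj ρ) = ρ := by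
  apply Equiv.ext
  intro i
  apply (((M.image ψ)ᶜ).orderEmbOfFin (complV_card M ψ hψinj)).injective
  rw [downPerm_val hψinj _ (upPerm_ext hψinj ρ) i]
  have hnotM : ((Mᶜ).orderEmbOfFin (compl_card M) i) ∉ M :=
    Finset.mem_compl.mp (Finset.orderEmbOfFin_mem _ _ _)
  show (if h : ((Mᶜ).orderEmbOfFin (compl_card M) i) ∈ M then _ else _) = _
  rw [dif_neg hnotM]
  congr 1
  congr 1
  exact orderIsoOfFin_symm_emb (Mᶜ) (compl_card M) i

open scoped Classical in
lemma card_fiber (ha : a ≤ m) (hM : ∀ p ∈ M, (p : ℕ) < l)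
    (hψinj : Set.InjOn ψ ↑M) (hψspec : ∀ p ∈ M, Spec n m a (ψ p)) :
    #(univ.filter fun π : Perm (Fin n) =>
        PAvoids π (sigmaP (l + m) l a) ∧ ∀ p ∈ M, π p = ψ p)
      = #(univ.filter fun ρ : Perm (Fin (n - #M)) => PAvoids ρ (sigmaP (l + m) l a)) := by
  apply Finset.card_bij
    (fun π hπ => downPerm hψinj π (Finset.mem_filter.mp hπ).2.2)
  · intro π hπ
    obtain ⟨-, hav, hext⟩ := Finset.mem_filter.mp hπ
    simp only [mem_filter, mem_univ, true_and]
    exact (avoids_down_iff ha hM hψinj hψspec π hext).mp hav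
  · intro π1 hπ1 π2 hπ2 heq
    obtain ⟨-, -, hext1⟩ := Finset.mem_filter.mp hπ1
    obtain ⟨-, -, hext2⟩ := Finset.mem_filter.mp hπ2
    apply Equiv.ext
    intro x
    by_cases hx : x ∈ M
    · rw [hext1 x hx, hext2 x hx]
    · have hxc : x ∈ Mᶜ := Finset.mem_compl.mpr hx
      set i := ((Mᶜ).orderIsoOfFin (compl_card M)).symm ⟨x, hxc⟩ with hidef
      have hpe : (Mᶜ).orderEmbOfFin (compl_card M) i = x := orderEmbOfFin_symm' _ _ x hxc
      have h1 := downPerm_val hψinj π1 hext1 i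
      have h2 := downPerm_val hψinj π2 hext2 i
      rw [hpe] at h1 h2
      rw [← h1, ← h2, heq]
  · intro ρ hρ
    simp only [mem_filter, mem_univ, true_and] at hρ
    have hmem : upPerm hψinj ρ ∈ univ.filter (fun π : Perm (Fin n) =>
        PAvoids π (sigmaP (l + m) l a) ∧ ∀ p ∈ M, π p = ψ p) := by
      simp only [mem_filter, mem_univ, true_and]
      refine ⟨?_, upPerm_ext hψinj ρ⟩
      rw [avoids_down_iff ha hM hψinj hψspec _ (upPerm_ext hψinj ρ), down_up hψinj ρ]
      exact hρ
    exact ⟨upPerm hψinj ρ, hmem, down_up hψinj ρ⟩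

end Up


section Assembly
open scoped Classical

variable {l m a n : ℕ}

/-- the finset of avoiders -/
noncomputable def AV (l m a n : ℕ) : Finset (Perm (Fin n)) :=
  univ.filter fun π => PAvoids π (sigmaP (l + m) l a)

/-- the occurrence set: positions `< l` with special values -/
noncomputable def Occ (l m a : ℕ) {n : ℕ} (π : Perm (Fin n)) : Finset (Fin n) :=
  univ.filter fun p => (p : ℕ) < l ∧ Spec n m a (π p)

lemma Occ_subset (π : Perm (Fin n)) :
    Occ l m a π ⊆ univ.filter (fun p : Fin n => (p : ℕ) < l) := by
  intro p hp
  simp only [Occ, mem_filter, mem_univ, true_and] at hp ⊢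
  exact hp.1

lemma Occ_card_le (hln : l ≤ n) (π : Perm (Fin n)) : #(Occ l m a π) ≤ l := by
  have := Finset.card_le_card (Occ_subset (l := l) (a := a) (m := m) π)
  rwa [card_filter_val_lt l hln] at this

lemma Occ_card_pos (hl : 1 ≤ l) (hm : 1 ≤ m) (ha : a ≤ m) (hn : l + m ≤ n)
    (π : Perm (Fin n)) (hπ : π ∈ AV l m a n) : 1 ≤ #(Occ l m a π) := by
  simp only [AV, mem_filter, mem_univ, true_and] at hπ
  obtain ⟨p, hp1, hp2⟩ := exists_spec hl hm ha hn π hπ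
  exact Finset.card_pos.mpr
    ⟨p, by simp only [Occ, mem_filter, mem_univ, true_and]; exact ⟨hp1, hp2⟩⟩

lemma card_spec_filter (ha : a ≤ m) (hmn : m ≤ n) :
    #(univ.filter fun v : Fin n => Spec n m a v) = m := by
  have hu : (univ.filter fun v : Fin n => Spec n m a v)
      = (univ.filter fun v : Fin n => (v : ℕ) < a) ∪
        (univ.filter fun v : Fin n => n - m + a ≤ (v : ℕ)) := by
    rw [← Finset.filter_or]
    apply Finset.filter_congr; intro v _; rfl
  have hd2 : Disjoint (univ.filter fun v : Fin n => (v : ℕ) < a)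
      (univ.filter fun v : Fin n => n - m + a ≤ (v : ℕ)) := by
    rw [Finset.disjoint_left]
    intro v h1 h2
    simp only [mem_filter, mem_univ, true_and] at h1 h2
    omega
  rw [hu, Finset.card_union_of_disjoint hd2, card_filter_val_lt a (by omega),
    card_filter_le_val (n - m + a) (by omega)]
  omega

/-- the number of injections of `M` into the special values -/
lemma card_inj_spec (ha : a ≤ m) (hmn : m ≤ n) (M : Finset (Fin n)) :
    #(univ.filter (fun χ : {x // x ∈ M} → Fin n =>
        Function.Injective χ ∧ ∀ q, Spec n m a (χ q)))
      = m.descFactorial #M := by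
  have hcemb : #(univ.filter (fun χ : {x // x ∈ M} → Fin n =>
        Function.Injective χ ∧ ∀ q, Spec n m a (χ q)))
      = Fintype.card ({x // x ∈ M} ↪ {v : Fin n // Spec n m a v}) := by
    rw [← Finset.card_univ]
    apply Finset.card_bij (fun χ hχ =>
      (⟨fun q => ⟨χ q, (Finset.mem_filter.mp hχ).2.2 q⟩,
        fun q q' h => (Finset.mem_filter.mp hχ).2.1 (congrArg Subtype.val h)⟩ :
        {x // x ∈ M} ↪ {v : Fin n // Spec n m a v}))
    · intro χ hχ; exact Finset.mem_univ _
    · intro χ1 hχ1 χ2 hχ2 heq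
      funext q
      have := congrArg (fun e : {x // x ∈ M} ↪ {v : Fin n // Spec n m a v} => (e q : Fin n)) heq
      exact this
    · intro e _
      refine ⟨fun q => (e q : Fin n), ?_, ?_⟩
      · simp only [Finset.mem_filter, mem_univ, true_and]
        refine ⟨fun q q' h => e.injective (Subtype.ext h), fun q => (e q).2⟩
      · apply Function.Embedding.ext
        intro q
        apply Subtype.ext
        rfl
  rw [hcemb, Fintype.card_embedding_eq, Fintype.card_coe]
  congr 1
  rw [Fintype.card_subtype]
  exact card_spec_filter ha hmn

/-- the count of avoiders with `j` marked occurrence cells -/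
lemma count_j (hl : 1 ≤ l) (hm : 1 ≤ m) (ha : a ≤ m) (hn : l + m ≤ n)
    (j : ℕ) (hj : j ≤ l) :
    ∑ π ∈ AV l m a n, (#(Occ l m a π)).choose j
      = l.choose j * (m.descFactorial j * #(AV l m a (n - j))) := by
  -- step 1: choose = number of j-subsets of Occ
  have step1 : ∀ π ∈ AV l m a n, (#(Occ l m a π)).choose j
      = ∑ M ∈ (univ.filter (fun p : Fin n => (p : ℕ) < l)).powersetCard j,
          (if M ⊆ Occ l m a π then 1 else 0) := by
    intro π _
    rw [← Finset.card_powersetCard]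
    rw [show (Occ l m a π).powersetCard j
        = ((univ.filter (fun p : Fin n => (p : ℕ) < l)).powersetCard j).filter
            (fun M => M ⊆ Occ l m a π) from ?_]
    · exact Finset.card_filter _ _
    · ext M
      simp only [Finset.mem_powersetCard, Finset.mem_filter]
      constructor
      · rintro ⟨hsub, hcard⟩
        exact ⟨⟨hsub.trans (Occ_subset π), hcard⟩, hsub⟩
      · rintro ⟨⟨_, hcard⟩, hsub⟩
        exact ⟨hsub, hcard⟩
  rw [Finset.sum_congr rfl step1, Finset.sum_comm]
  -- step 2: inner sums are fiber counts
  have step2 : ∀ M ∈ (univ.filter (fun p : Fin n => (p : ℕ) < l)).powersetCard j,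
      ∑ π ∈ AV l m a n, (if M ⊆ Occ l m a π then 1 else 0)
        = m.descFactorial j * #(AV l m a (n - j)) := by
    intro M hM
    obtain ⟨hML, hMcard⟩ := Finset.mem_powersetCard.mp hM
    subst hMcard
    have hMl : ∀ p ∈ M, (p : ℕ) < l := by
      intro p hp
      have := hML hp
      simpa using this
    rw [← Finset.card_filter]
    -- reformulate the filtered set
    have hset : (AV l m a n).filter (fun π => M ⊆ Occ l m a π)
        = univ.filter (fun π : Perm (Fin n) =>
            PAvoids π (sigmaP (l + m) l a) ∧ ∀ p ∈ M, Spec n m a (π p)) := by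
      ext π
      simp only [AV, Finset.mem_filter, mem_univ, true_and, and_assoc]
      constructor
      · rintro ⟨hav, hsub⟩
        refine ⟨hav, fun p hp => ?_⟩
        have := hsub hp
        simp only [Occ, mem_filter, mem_univ, true_and] at this
        exact this.2
      · rintro ⟨hav, hsp⟩
        refine ⟨hav, fun p hp => ?_⟩
        simp only [Occ, mem_filter, mem_univ, true_and]
        exact ⟨hMl p hp, hsp p hp⟩
    rw [hset]
    -- fiberwise decomposition over the restriction to M
    set t : Finset ({x // x ∈ M} → Fin n) :=
      univ.filter (fun χ => Function.Injective χ ∧ ∀ q, Spec n m a (χ q)) with htdef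
    have hmapsto : ∀ π ∈ univ.filter (fun π : Perm (Fin n) =>
        PAvoids π (sigmaP (l + m) l a) ∧ ∀ p ∈ M, Spec n m a (π p)),
        (fun q : {x // x ∈ M} => π q) ∈ t := by
      intro π hπ
      simp only [Finset.mem_filter, mem_univ, true_and] at hπ
      simp only [htdef, Finset.mem_filter, mem_univ, true_and]
      constructor
      · intro q q' h
        exact Subtype.ext (π.injective h)
      · intro q
        exact hπ.2 q q.2
    rw [Finset.card_eq_sum_card_fiberwise hmapsto]
    -- each fiber has the same cardinality
    have hfiber : ∀ χ ∈ t,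
        #((univ.filter (fun π : Perm (Fin n) =>
            PAvoids π (sigmaP (l + m) l a) ∧ ∀ p ∈ M, Spec n m a (π p))).filter
          (fun π => (fun q : {x // x ∈ M} => π q) = χ))
        = #(AV l m a (n - #M)) := by
      intro χ hχ
      simp only [htdef, Finset.mem_filter, mem_univ, true_and] at hχ
      obtain ⟨hχinj, hχspec⟩ := hχ
      set ψ : Fin n → Fin n := fun x => if h : x ∈ M then χ ⟨x, h⟩ else x with hψdef
      have hψinj : Set.InjOn ψ ↑M := by
        intro x hx y hy h
        simp only [Finset.mem_coe] at hx hy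
        simp only [hψdef, dif_pos hx, dif_pos hy] at h
        exact Subtype.ext_iff.mp (hχinj h)
      have hψspec : ∀ p ∈ M, Spec n m a (ψ p) := by
        intro p hp
        simp only [hψdef, dif_pos hp]
        exact hχspec ⟨p, hp⟩
      have hsame : (univ.filter (fun π : Perm (Fin n) =>
            PAvoids π (sigmaP (l + m) l a) ∧ ∀ p ∈ M, Spec n m a (π p))).filter
          (fun π => (fun q : {x // x ∈ M} => π q) = χ)
          = univ.filter (fun π : Perm (Fin n) =>
              PAvoids π (sigmaP (l + m) l a) ∧ ∀ p ∈ M, π p = ψ p) := by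
        ext π
        simp only [Finset.mem_filter, mem_univ, true_and, and_assoc]
        constructor
        · rintro ⟨hav, _, hres⟩
          refine ⟨hav, fun p hp => ?_⟩
          simp only [hψdef, dif_pos hp]
          exact congrFun hres ⟨p, hp⟩
        · rintro ⟨hav, hext⟩
          refine ⟨hav, fun p hp => ?_, funext fun q => ?_⟩
          · rw [hext p hp, hψdef]
            simp only [dif_pos hp]
            exact hχspec ⟨p, hp⟩
          · rw [hext q q.2, hψdef]
            simp only [dif_pos q.2]
        
      rw [hsame, card_fiber ha hMl hψinj hψspec]
      rfl
    rw [Finset.sum_congr rfl hfiber, Finset.sum_const, smul_eq_mul]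
    -- the number of fibers
    congr 1
    exact card_inj_spec ha (by omega) M
  rw [Finset.sum_congr rfl step2, Finset.sum_const, smul_eq_mul,
    Finset.card_powersetCard, card_filter_val_lt l (by omega)]

end Assembly


lemma alt_vanish {o L : ℕ} (ho : 1 ≤ o) (hol : o ≤ L) :
    ∑ j ∈ range (L + 1), (-1 : ℤ) ^ j * (o.choose j) = 0 := by
  have hz : ∑ j ∈ range (L + 1), (-1 : ℤ) ^ j * o.choose j
      = ∑ j ∈ range (o + 1), (-1 : ℤ) ^ j * o.choose j := by
    symm
    apply Finset.sum_subset
    · intro x hx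
      simp only [mem_range] at hx ⊢
      omega
    · intro x hx hnx
      simp only [mem_range] at hx hnx
      rw [Nat.choose_eq_zero_of_lt (by omega)]
      simp
  rw [hz, Int.alternating_sum_range_choose, if_neg (by omega)]

end AvoidRec

open AvoidRec in
theorem avoiders_linear_recurrence (l m a n : ℕ) (hl : 1 ≤ l) (hm : 1 ≤ m)
    (ha : a ≤ m) (hn : l + m ≤ n) :
    ∑ j ∈ Finset.range (l + 1),
        (-1 : ℤ) ^ j * (j.factorial : ℤ) * (m.choose j) * (l.choose j) *
          (avoidersCard (l + m) (sigmaP (l + m) l a) (n - j) : ℤ) = 0 := by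
  classical
  have hAC : ∀ j : ℕ, (avoidersCard (l + m) (sigmaP (l + m) l a) (n - j)) = #(AV l m a (n - j)) := by
    intro j
    rw [avoidersCard, Set.ncard_eq_toFinset_card', Set.toFinset_setOf]
    simp [AV]
  have h1 : ∀ j ∈ Finset.range (l + 1),
      (-1 : ℤ) ^ j * (j.factorial : ℤ) * (m.choose j) * (l.choose j) *
          (avoidersCard (l + m) (sigmaP (l + m) l a) (n - j) : ℤ)
        = ∑ π ∈ AV l m a n, (-1 : ℤ) ^ j * ((#(Occ l m a π)).choose j : ℤ) := by
    intro j hj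
    rw [← Finset.mul_sum, hAC j]
    have hc := count_j hl hm ha hn j (by simp only [Finset.mem_range] at hj; omega)
    have hc2 : ((∑ π ∈ AV l m a n, (#(Occ l m a π)).choose j : ℕ) : ℤ)
        = (l.choose j : ℤ) * ((m.descFactorial j : ℤ) * (#(AV l m a (n - j)) : ℤ)) := by
      rw [hc]; push_cast; ring
    push_cast at hc2 ⊢
    rw [hc2, Nat.descFactorial_eq_factorial_mul_choose]
    push_cast
    ring
  rw [Finset.sum_congr rfl h1, Finset.sum_comm]
  apply Finset.sum_eq_zero
  intro π hπ
  exact alt_vanish (Occ_card_pos hl hm ha hn π hπ) (Occ_card_le (by omega) π)
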